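/- Fix integers T ≥ 1 and n ≥ 1, matrices A_t ∈ ℝ^{n×n} and symmetric positive definite W_t (t = 0,…,T−1), a symmetric positive definite P_0, symmetric positive semidefinite Θ_t and reals D_t > 0 (t = 1,…,T), and reals α_t ≥ 0 (t = 1,…,T). Then the infimum of Σ_{t=1}^{T} [½ log det(A_{t−1} P_{t−1} A_{t−1}ᵀ + W_{t−1}) − ½ log det P_t + (α_t/2) Tr(Θ_t P_t)] over T-tuples of symmetric matrices with 0 ≺ P_t ⪯ A_{t−1} P_{t−1} A_{t−1}ᵀ + W_{t−1} for all t = 1,…,T equals the infimum of Σ_{t=1}^{T} [(α_t/2) Tr(Θ_t P_t) − ½ log det Π_t] + c over the soft max-det feasible set F₀. -/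

import Mathlib

open Matrix

/-- The soft nested feasible set: sequences `P` with `P 0 = P₀` and
`0 ≺ P t ⪯ A (t−1) * P (t−1) * (A (t−1))ᵀ + W (t−1)` for `t = 1, …, T`. -/
def softNestedFeasible (n T : ℕ) (A W : ℕ → Matrix (Fin n) (Fin n) ℝ)
    (P₀ : Matrix (Fin n) (Fin n) ℝ) :
    Set (ℕ → Matrix (Fin n) (Fin n) ℝ) :=
  {P | P 0 = P₀ ∧ ∀ t, 1 ≤ t → t ≤ T →
    (P t).PosDef ∧
    (A (t - 1) * P (t - 1) * (A (t - 1))ᵀ + W (t - 1) - P t).PosSemidef}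

/-- The soft nested objective
`Σ_{t=1}^{T} [½ log det (A (t−1) P (t−1) (A (t−1))ᵀ + W (t−1)) − ½ log det (P t)
  + (α t / 2) Tr(Θ t * P t)]`. -/
noncomputable def softNestedObj (n T : ℕ) (A W Θ : ℕ → Matrix (Fin n) (Fin n) ℝ)
    (α : ℕ → ℝ) (P : ℕ → Matrix (Fin n) (Fin n) ℝ) : ℝ :=
  ∑ t ∈ Finset.Icc 1 T,
    ((1 / 2) * Real.log (A (t - 1) * P (t - 1) * (A (t - 1))ᵀ + W (t - 1)).det -
      (1 / 2) * Real.log (P t).det + (α t / 2) * (Θ t * P t).trace)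

/-- The soft max-det feasible set `F₀`: like `F` but without the trace constraints. -/
def softMaxdetFeasible (n T : ℕ) (A W : ℕ → Matrix (Fin n) (Fin n) ℝ)
    (P₀ : Matrix (Fin n) (Fin n) ℝ) :
    Set ((ℕ → Matrix (Fin n) (Fin n) ℝ) × (ℕ → Matrix (Fin n) (Fin n) ℝ)) :=
  {PQ | PQ.1 0 = P₀ ∧
    (∀ t, 1 ≤ t → t ≤ T → (PQ.2 t).PosDef) ∧
    (∀ t, t < T → (A t * PQ.1 t * (A t)ᵀ + W t - PQ.1 (t + 1)).PosSemidef) ∧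
    (∀ t, 1 ≤ t → t < T →
      (fromBlocks (PQ.1 t - PQ.2 t) (PQ.1 t * (A t)ᵀ) (A t * PQ.1 t)
        (W t + A t * PQ.1 t * (A t)ᵀ)).PosSemidef) ∧
    PQ.1 T = PQ.2 T}

/-- The constant `c = ½ log det (A 0 P₀ (A 0)ᵀ + W 0) + Σ_{t=1}^{T−1} ½ log det (W t)`. -/
noncomputable def maxdetConst (n T : ℕ) (A W : ℕ → Matrix (Fin n) (Fin n) ℝ)
    (P₀ : Matrix (Fin n) (Fin n) ℝ) : ℝ :=
  (1 / 2) * Real.log (A 0 * P₀ * (A 0)ᵀ + W 0).det +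
    ∑ t ∈ Finset.Ico 1 T, (1 / 2) * Real.log (W t).det

/-- The soft max-det objective
`Σ_{t=1}^{T} [(α t / 2) Tr(Θ t * P t) − ½ log det (Π t)] + c`. -/
noncomputable def softMaxdetObj (n T : ℕ) (A W Θ : ℕ → Matrix (Fin n) (Fin n) ℝ)
    (P₀ : Matrix (Fin n) (Fin n) ℝ) (α : ℕ → ℝ)
    (PQ : (ℕ → Matrix (Fin n) (Fin n) ℝ) × (ℕ → Matrix (Fin n) (Fin n) ℝ)) : ℝ :=
  ∑ t ∈ Finset.Icc 1 T,
    ((α t / 2) * (Θ t * PQ.1 t).trace - (1 / 2) * Real.log (PQ.2 t).det) +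
    maxdetConst n T A W P₀

namespace SoftAux

variable {n : ℕ}

abbrev Mat' (n : ℕ) := Matrix (Fin n) (Fin n) ℝ

lemma posDef_of_posSemidef_det_ne_zero {X : Mat' n} (hX : X.PosSemidef)
    (hd : X.det ≠ 0) : X.PosDef := by
  refine .of_dotProduct_mulVec_pos hX.1 fun x hx => ?_
  rcases lt_or_eq_of_le (hX.dotProduct_mulVec_nonneg x) with h | h
  · exact h
  · exfalso
    have h0 : X *ᵥ x = 0 := (hX.dotProduct_mulVec_zero_iff x).mp h.symm
    have hinj : Function.Injective (X.mulVec) :=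
      (Matrix.mulVec_injective_iff_isUnit).mpr ((Matrix.isUnit_iff_isUnit_det _).mpr hd.isUnit)
    exact hx (hinj (by simpa using h0))

lemma det_le_one {Z : Mat' n} (hZ : Z.PosSemidef) (h1 : ((1 : Mat' n) - Z).PosSemidef) :
    Z.det ≤ 1 := by
  have hdet := hZ.1.det_eq_prod_eigenvalues
  rw [hdet]
  simp only [RCLike.ofReal_real_eq_id, id]
  refine Finset.prod_le_one (fun i _ => hZ.eigenvalues_nonneg i) (fun i _ => ?_)
  set v : Fin n → ℝ := ⇑(hZ.1.eigenvectorBasis i) with hv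
  have hvne : v ≠ 0 := by
    have := hZ.1.eigenvectorBasis.orthonormal.ne_zero i
    simpa [hv] using this
  have hev : Z *ᵥ v = hZ.1.eigenvalues i • v := hZ.1.mulVec_eigenvectorBasis i
  have h := h1.dotProduct_mulVec_nonneg v
  rw [sub_mulVec, one_mulVec, dotProduct_sub, hev] at h
  have hvv : (0:ℝ) < star v ⬝ᵥ v := by
    simpa using dotProduct_star_self_pos_iff.mpr hvne
  have hsm : star v ⬝ᵥ (hZ.1.eigenvalues i • v) = hZ.1.eigenvalues i * (star v ⬝ᵥ v) := by
    rw [dotProduct_smul]; simp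
  rw [hsm] at h
  nlinarith [mul_pos hvv hvv]

open scoped MatrixOrder in
lemma det_mono {X Y : Mat' n} (hX : X.PosSemidef) (hY : Y.PosDef)
    (hXY : (Y - X).PosSemidef) : X.det ≤ Y.det := by
  set S := CFC.sqrt Y with hSdef
  have hS : S.PosSemidef := (CFC.sqrt_nonneg Y).posSemidef
  have hmul : S * S = Y := CFC.sqrt_mul_sqrt_self Y hY.posSemidef.nonneg
  have hdetS : S.det * S.det = Y.det := by rw [← det_mul, hmul]
  have hYpos : 0 < Y.det := hY.det_pos
  have hdS : S.det ≠ 0 := by intro h; rw [h, mul_zero] at hdetS; linarith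
  have hSpd : S.PosDef := posDef_of_posSemidef_det_ne_zero hS hdS
  have hSi : S⁻¹.PosDef := hSpd.inv
  have hSih : S⁻¹ᴴ = S⁻¹ := hSi.1
  have hinv1 : S⁻¹ * S = 1 := nonsing_inv_mul _ hdS.isUnit
  have hinv2 : S * S⁻¹ = 1 := mul_nonsing_inv _ hdS.isUnit
  set Z := S⁻¹ * X * S⁻¹ with hZdef
  have hZ : Z.PosSemidef := by
    have := hX.mul_mul_conjTranspose_same S⁻¹
    rwa [hSih] at this
  have hY1 : S⁻¹ * Y * S⁻¹ = 1 := by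
    rw [← hmul, ← mul_assoc S⁻¹ S S, hinv1, one_mul, hinv2]
  have h1 : ((1 : Mat' n) - Z) = S⁻¹ * (Y - X) * S⁻¹ := by
    rw [Matrix.mul_sub, Matrix.sub_mul, hY1, hZdef]
  have h1p : ((1 : Mat' n) - Z).PosSemidef := by
    rw [h1]
    have := hXY.mul_mul_conjTranspose_same S⁻¹
    rwa [hSih] at this
  have hdZ : Z.det ≤ 1 := det_le_one hZ h1p
  have hdetSi : S⁻¹.det = (S.det)⁻¹ := by rw [det_nonsing_inv, Ring.inverse_eq_inv]
  have hZdet : Z.det * Y.det = X.det := by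
    rw [hZdef, det_mul, det_mul, hdetSi, ← hdetS]
    field_simp
    try ring
  nlinarith [mul_nonneg (sub_nonneg.mpr hdZ) hYpos.le, hZdet]

/-- Schur complement `P - P Aᵀ (W + A P Aᵀ)⁻¹ A P`. -/
noncomputable def schurPi (A P W : Mat' n) : Mat' n :=
  P - P * Aᵀ * (W + A * P * Aᵀ)⁻¹ * (A * P)

variable {A P W : Mat' n}

lemma conjT_real (X : Mat' n) : Xᴴ = Xᵀ :=
  conjTranspose_eq_transpose_of_trivial X

lemma S_posDef (hP : P.PosDef) (hW : W.PosDef) : (W + A * P * Aᵀ).PosDef := by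
  apply hW.add_posSemidef
  have := hP.posSemidef.mul_mul_conjTranspose_same A
  rwa [conjT_real] at this

lemma BH_eq (hP : P.PosDef) : (P * Aᵀ)ᴴ = A * P := by
  rw [conjTranspose_mul, conjT_real, conjT_real, transpose_transpose, ← conjT_real, hP.1.eq]

lemma key_mul (hP : P.PosDef) (hW : W.PosDef) :
    schurPi A P W * (P⁻¹ + Aᵀ * W⁻¹ * A) = 1 := by
  have hS : (W + A * P * Aᵀ).PosDef := S_posDef hP hW
  have hPinv : P * P⁻¹ = 1 := mul_nonsing_inv _ hP.det_pos.ne'.isUnit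
  have hWinv : W * W⁻¹ = 1 := mul_nonsing_inv _ hW.det_pos.ne'.isUnit
  have hSinv : (W + A * P * Aᵀ)⁻¹ * (W + A * P * Aᵀ) = 1 :=
    nonsing_inv_mul _ hS.det_pos.ne'.isUnit
  have hstep : (A * P) * (P⁻¹ + Aᵀ * W⁻¹ * A) = (W + A * P * Aᵀ) * (W⁻¹ * A) := by
    rw [Matrix.mul_add, Matrix.add_mul]
    congr 1
    · rw [mul_assoc A P P⁻¹, hPinv, mul_one, ← mul_assoc W W⁻¹ A, hWinv, one_mul]
    · rw [mul_assoc (A * P) Aᵀ (W⁻¹ * A), ← mul_assoc Aᵀ W⁻¹ A]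
  unfold schurPi
  rw [Matrix.sub_mul, mul_assoc (P * Aᵀ * (W + A * P * Aᵀ)⁻¹) (A * P) _, hstep,
    mul_assoc (P * Aᵀ) (W + A * P * Aᵀ)⁻¹ _, ← mul_assoc (W + A * P * Aᵀ)⁻¹ _ (W⁻¹ * A),
    hSinv, one_mul, Matrix.mul_add, hPinv]
  noncomm_ring

lemma schurPi_posDef (hP : P.PosDef) (hW : W.PosDef) : (schurPi A P W).PosDef := by
  have hQ : (P⁻¹ + Aᵀ * W⁻¹ * A).PosDef := by
    apply hP.inv.add_posSemidef
    have := hW.inv.posSemidef.conjTranspose_mul_mul_same A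
    rwa [conjT_real] at this
  have h := Matrix.inv_eq_left_inv (key_mul (A := A) hP hW)
  rw [← h]
  exact hQ.inv

lemma schurPi_det (hP : P.PosDef) (hW : W.PosDef) :
    (W + A * P * Aᵀ).det * (schurPi A P W).det = P.det * W.det := by
  have hS : (W + A * P * Aᵀ).PosDef := S_posDef hP hW
  haveI := hS.isUnit.invertible
  haveI := hP.isUnit.invertible
  have h1 := Matrix.det_fromBlocks₂₂ P (P * Aᵀ) (A * P) (W + A * P * Aᵀ)
  have h2 := Matrix.det_fromBlocks₁₁ P (P * Aᵀ) (A * P) (W + A * P * Aᵀ)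
  rw [invOf_eq_nonsing_inv] at h1 h2
  have h3 : A * P * P⁻¹ * (P * Aᵀ) = A * P * Aᵀ := by
    rw [mul_assoc A P P⁻¹, mul_nonsing_inv _ hP.det_pos.ne'.isUnit, mul_one,
      ← mul_assoc A P Aᵀ]
  rw [h3, add_sub_cancel_right] at h2
  unfold schurPi
  rw [← h1]
  exact h2

lemma schurPi_block (hP : P.PosDef) (hW : W.PosDef) :
    (fromBlocks (P - schurPi A P W) (P * Aᵀ) (A * P) (W + A * P * Aᵀ)).PosSemidef := by
  have hS : (W + A * P * Aᵀ).PosDef := S_posDef hP hW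
  haveI := hS.isUnit.invertible
  have hiff := Matrix.PosDef.fromBlocks₂₂ (P - schurPi A P W) (P * Aᵀ) hS
  rw [BH_eq hP] at hiff
  rw [hiff]
  have h0 : P - schurPi A P W - P * Aᵀ * (W + A * P * Aᵀ)⁻¹ * (A * P) = 0 := by
    unfold schurPi; abel
  rw [h0]
  exact Matrix.PosSemidef.zero

/-- From the block-PSD constraint, `Π ⪯ schurPi`. -/
lemma schurPi_le_of_block {Q : Mat' n} (hP : P.PosDef) (hW : W.PosDef)
    (hblk : (fromBlocks (P - Q) (P * Aᵀ) (A * P) (W + A * P * Aᵀ)).PosSemidef) :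
    (schurPi A P W - Q).PosSemidef := by
  have hS : (W + A * P * Aᵀ).PosDef := S_posDef hP hW
  haveI := hS.isUnit.invertible
  have hiff := Matrix.PosDef.fromBlocks₂₂ (P - Q) (P * Aᵀ) hS
  rw [BH_eq hP] at hiff
  rw [hiff] at hblk
  have h0 : P - Q - P * Aᵀ * (W + A * P * Aᵀ)⁻¹ * (A * P) = schurPi A P W - Q := by
    unfold schurPi; abel
  rwa [h0] at hblk

/-- The canonical choice of `Π` given `P`. -/
noncomputable def mkPi (T : ℕ) (A W P : ℕ → Mat' n) : ℕ → Mat' n :=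
  fun t => if t = T then P T else schurPi (A t) (P t) (W t)

lemma sum_identity (T : ℕ) (hT : 1 ≤ T) (f h g w : ℕ → ℝ)
    (hg : ∀ t, 1 ≤ t → t < T → g t = h t + w t - f t) (hgT : g T = h T) :
    ∑ t ∈ Finset.Icc 1 T, (f (t-1) - h t + g t) = f 0 + ∑ t ∈ Finset.Ico 1 T, w t := by
  rw [← Finset.Ico_insert_right hT, Finset.sum_insert (by simp)]
  have hcong : ∀ t ∈ Finset.Ico 1 T, f (t-1) - h t + g t = (f (t-1) - f t) + w t := by
    intro t ht
    rw [Finset.mem_Ico] at ht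
    rw [hg t ht.1 ht.2]; ring
  rw [Finset.sum_congr rfl hcong, Finset.sum_add_distrib]
  have htel : ∑ t ∈ Finset.Ico 1 T, (f (t-1) - f t) = f 0 - f (T-1) := by
    rw [Finset.sum_Ico_eq_sum_range]
    have hc : ∀ i ∈ Finset.range (T-1), f (1 + i - 1) - f (1 + i) = f i - f (i+1) := by
      intro i _
      have e1 : 1 + i - 1 = i := by omega
      have e2 : 1 + i = i + 1 := by omega
      rw [e1, e2]
    rw [Finset.sum_congr rfl hc, Finset.sum_range_sub' f]
  rw [htel, hgT]
  ring

lemma obj_identity (T : ℕ) (hT : 1 ≤ T) (f h g w tr : ℕ → ℝ)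
    (hg : ∀ t, 1 ≤ t → t < T → g t = h t + w t - f t) (hgT : g T = h T) :
    (∑ t ∈ Finset.Icc 1 T, (tr t - g t)) + (f 0 + ∑ t ∈ Finset.Ico 1 T, w t)
      = ∑ t ∈ Finset.Icc 1 T, (f (t-1) - h t + tr t) := by
  have hsum := sum_identity T hT f h g w hg hgT
  have hsplit : ∑ t ∈ Finset.Icc 1 T, (f (t-1) - h t + tr t)
      - ∑ t ∈ Finset.Icc 1 T, (tr t - g t)
      = ∑ t ∈ Finset.Icc 1 T, (f (t-1) - h t + g t) := by
    rw [← Finset.sum_sub_distrib]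
    exact Finset.sum_congr rfl (fun t _ => by ring)
  linarith

lemma forward {T : ℕ} (hT : 1 ≤ T) (A W Θ : ℕ → Mat' n) (P₀ : Mat' n) (α : ℕ → ℝ)
    (hW : ∀ t, t < T → (W t).PosDef)
    (P : ℕ → Mat' n) (hP : P ∈ softNestedFeasible n T A W P₀) :
    (P, mkPi T A W P) ∈ softMaxdetFeasible n T A W P₀ ∧
    softMaxdetObj n T A W Θ P₀ α (P, mkPi T A W P) = softNestedObj n T A W Θ α P := by
  have hPD : ∀ t, 1 ≤ t → t ≤ T → (P t).PosDef := fun t h1 h2 => (hP.2 t h1 h2).1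
  constructor
  · simp only [softMaxdetFeasible, Set.mem_setOf_eq]
    refine ⟨hP.1, ?_, ?_, ?_, ?_⟩
    · intro t h1 h2
      by_cases ht : t = T
      · subst ht; simpa [mkPi] using hPD t h1 h2
      · have hlt : t < T := lt_of_le_of_ne h2 ht
        simpa [mkPi, ht] using schurPi_posDef (hPD t h1 h2) (hW t hlt)
    · intro t ht
      have := (hP.2 (t+1) (by omega) (by omega)).2
      simpa using this
    · intro t h1 h2
      have hmk : mkPi T A W P t = schurPi (A t) (P t) (W t) := by simp [mkPi, h2.ne]
      rw [hmk]
      exact schurPi_block (hPD t h1 h2.le) (hW t h2)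
    · simp [mkPi]
  · have hg : ∀ t, 1 ≤ t → t < T →
        (1 / 2 : ℝ) * Real.log ((mkPi T A W P) t).det =
          (1 / 2) * Real.log (P t).det + (1 / 2) * Real.log (W t).det -
            (1 / 2) * Real.log (A t * P t * (A t)ᵀ + W t).det := by
      intro t h1 h2
      have hPt := hPD t h1 h2.le
      have hWt := hW t h2
      have hS := S_posDef (A := A t) hPt hWt
      have hPi := schurPi_posDef (A := A t) hPt hWt
      have hd := schurPi_det (A := A t) hPt hWt
      have hmk : (mkPi T A W P) t = schurPi (A t) (P t) (W t) := by simp [mkPi, h2.ne]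
      rw [hmk]
      have hlogs : Real.log ((W t + A t * P t * (A t)ᵀ).det * (schurPi (A t) (P t) (W t)).det)
          = Real.log ((P t).det * (W t).det) := by rw [hd]
      rw [Real.log_mul hS.det_pos.ne' hPi.det_pos.ne',
        Real.log_mul hPt.det_pos.ne' hWt.det_pos.ne'] at hlogs
      have hcomm : A t * P t * (A t)ᵀ + W t = W t + A t * P t * (A t)ᵀ := add_comm _ _
      rw [hcomm]
      linarith
    have hgT : (1 / 2 : ℝ) * Real.log ((mkPi T A W P) T).det =
        (1 / 2) * Real.log (P T).det := by simp [mkPi]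
    simp only [softMaxdetObj, softNestedObj, maxdetConst]
    rw [← hP.1]
    exact obj_identity T hT
      (fun t => (1 / 2) * Real.log (A t * P t * (A t)ᵀ + W t).det)
      (fun t => (1 / 2) * Real.log (P t).det)
      (fun t => (1 / 2) * Real.log ((mkPi T A W P) t).det)
      (fun t => (1 / 2) * Real.log (W t).det)
      (fun t => (α t / 2) * (Θ t * P t).trace) hg hgT

lemma backward {T : ℕ} (hT : 1 ≤ T) (A W Θ : ℕ → Mat' n) (P₀ : Mat' n) (α : ℕ → ℝ)
    (hW : ∀ t, t < T → (W t).PosDef)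
    (PQ : (ℕ → Mat' n) × (ℕ → Mat' n)) (hPQ : PQ ∈ softMaxdetFeasible n T A W P₀) :
    PQ.1 ∈ softNestedFeasible n T A W P₀ ∧
    softNestedObj n T A W Θ α PQ.1 ≤ softMaxdetObj n T A W Θ P₀ α PQ := by
  obtain ⟨P, Q⟩ := PQ
  obtain ⟨h0, hQpd, hcons, hblk, hPT⟩ := hPQ
  dsimp only at h0 hQpd hcons hblk hPT ⊢
  have hPD : ∀ t, 1 ≤ t → t ≤ T → (P t).PosDef := by
    intro t h1 h2
    rcases eq_or_lt_of_le h2 with heq | hlt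
    · have hq : P t = Q t := by rw [heq]; exact hPT
      rw [hq]; exact hQpd t h1 h2
    · have hb := hblk t h1 hlt
      have htl : (P t - Q t).PosSemidef := by
        have hsub := hb.submatrix (Sum.inl : Fin n → Fin n ⊕ Fin n)
        have he : (fromBlocks (P t - Q t) (P t * (A t)ᵀ) (A t * P t)
            (W t + A t * P t * (A t)ᵀ)).submatrix Sum.inl Sum.inl = P t - Q t := by
          ext i j; simp [Matrix.submatrix, Matrix.fromBlocks]
        rwa [he] at hsub
      have hadd : ((P t - Q t) + Q t).PosDef :=
        Matrix.PosDef.posSemidef_add htl (hQpd t h1 hlt.le)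
      simpa using hadd
  have hfeas : P ∈ softNestedFeasible n T A W P₀ := by
    refine ⟨h0, fun t h1 h2 => ⟨hPD t h1 h2, ?_⟩⟩
    obtain ⟨s, rfl⟩ : ∃ s, t = s + 1 := ⟨t - 1, by omega⟩
    simpa using hcons s (by omega)
  refine ⟨hfeas, ?_⟩
  have hfwd := forward hT A W Θ P₀ α hW P hfeas
  calc softNestedObj n T A W Θ α P
      = softMaxdetObj n T A W Θ P₀ α (P, mkPi T A W P) := hfwd.2.symm
    _ ≤ softMaxdetObj n T A W Θ P₀ α (P, Q) := by
        simp only [softMaxdetObj]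
        apply add_le_add_left
        apply Finset.sum_le_sum
        intro t ht
        rw [Finset.mem_Icc] at ht
        have hlog : Real.log (Q t).det ≤ Real.log ((mkPi T A W P) t).det := by
          rcases eq_or_lt_of_le ht.2 with heq | hlt
          · have hmkQ : (mkPi T A W P) t = Q t := by
              rw [heq]; simp only [mkPi, if_pos rfl]; exact hPT
            rw [hmkQ]
          · have hPt := hPD t ht.1 hlt.le
            have hWt := hW t hlt
            have hle := schurPi_le_of_block hPt hWt (hblk t ht.1 hlt)
            have hdet := det_mono (hQpd t ht.1 hlt.le).posSemidef
              (schurPi_posDef hPt hWt) hle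
            have hmk : (mkPi T A W P) t = schurPi (A t) (P t) (W t) := by
              simp [mkPi, hlt.ne]
            rw [hmk]
            exact Real.log_le_log (hQpd t ht.1 hlt.le).det_pos hdet
        have : (α t / 2) * (Θ t * P t).trace - (1/2) * Real.log ((mkPi T A W P) t).det
            ≤ (α t / 2) * (Θ t * P t).trace - (1/2) * Real.log (Q t).det := by linarith
        simpa using this

lemma nested_nonempty {T : ℕ} (A W : ℕ → Mat' n) (P₀ : Mat' n)
    (hW : ∀ t, t < T → (W t).PosDef) (hP₀ : P₀.PosDef) :
    (softNestedFeasible n T A W P₀).Nonempty := by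
  let Pb : ℕ → Mat' n := fun t => Nat.rec P₀ (fun s Ps => A s * Ps * (A s)ᵀ + W s) t
  have hstep : ∀ s, Pb (s+1) = A s * Pb s * (A s)ᵀ + W s := fun s => rfl
  have hpd : ∀ t, t ≤ T → (Pb t).PosDef := by
    intro t
    induction t with
    | zero => intro _; exact hP₀
    | succ s ih =>
        intro hs
        rw [hstep]
        refine Matrix.PosDef.posSemidef_add ?_ (hW s (by omega))
        have := (ih (by omega)).posSemidef.mul_mul_conjTranspose_same (A s)
        rwa [conjT_real] at this
  refine ⟨Pb, rfl, fun t h1 h2 => ⟨hpd t h2, ?_⟩⟩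
  obtain ⟨s, rfl⟩ : ∃ s, t = s + 1 := ⟨t - 1, by omega⟩
  simp only [Nat.add_sub_cancel]
  rw [hstep s, sub_self]
  exact Matrix.PosSemidef.zero

end SoftAux

open SoftAux in
/-- The infimum of the soft-constrained nested objective over the soft
nested feasible set equals the infimum of the soft max-det objective over the soft
max-det feasible set `F₀`. -/
theorem soft_nested_eq_soft_maxdet (n T : ℕ) (hn : 0 < n) (hT : 1 ≤ T)
    (A W Θ : ℕ → Matrix (Fin n) (Fin n) ℝ) (P₀ : Matrix (Fin n) (Fin n) ℝ)
    (D : ℕ → ℝ) (α : ℕ → ℝ)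
    (hW : ∀ t, t < T → (W t).PosDef) (hP₀ : P₀.PosDef)
    (hΘ : ∀ t, 1 ≤ t → t ≤ T → (Θ t).PosSemidef)
    (hD : ∀ t, 1 ≤ t → t ≤ T → 0 < D t)
    (hα : ∀ t, 1 ≤ t → t ≤ T → 0 ≤ α t) :
    sInf (softNestedObj n T A W Θ α '' softNestedFeasible n T A W P₀) =
      sInf (softMaxdetObj n T A W Θ P₀ α '' softMaxdetFeasible n T A W P₀) := by
  set S1 := softNestedObj n T A W Θ α '' softNestedFeasible n T A W P₀ with hS1
  set S2 := softMaxdetObj n T A W Θ P₀ α '' softMaxdetFeasible n T A W P₀ with hS2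
  have hsub : S1 ⊆ S2 := by
    rintro x ⟨P, hP, rfl⟩
    obtain ⟨hm, he⟩ := forward hT A W Θ P₀ α hW P hP
    exact ⟨(P, mkPi T A W P), hm, he⟩
  have hbwd : ∀ b ∈ S2, ∃ a ∈ S1, a ≤ b := by
    rintro b ⟨PQ, hPQ, rfl⟩
    obtain ⟨hm, he⟩ := backward hT A W Θ P₀ α hW PQ hPQ
    exact ⟨softNestedObj n T A W Θ α PQ.1, ⟨PQ.1, hm, rfl⟩, he⟩
  have hne1 : S1.Nonempty := (nested_nonempty A W P₀ hW hP₀).image _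
  have hne2 : S2.Nonempty := hne1.mono hsub
  by_cases hbdd : BddBelow S2
  · have hbdd1 : BddBelow S1 := BddBelow.mono hsub hbdd
    refine le_antisymm ?_ ?_
    · refine le_csInf hne2 fun b hb => ?_
      obtain ⟨a, ha, hab⟩ := hbwd b hb
      exact (csInf_le hbdd1 ha).trans hab
    · exact csInf_le_csInf hbdd hne1 hsub
  · have hbdd1 : ¬ BddBelow S1 := by
      rintro ⟨l, hl⟩
      exact hbdd ⟨l, fun b hb => by
        obtain ⟨a, ha, hab⟩ := hbwd b hb
        exact (hl ha).trans hab⟩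
    rw [csInf_of_not_bddBelow hbdd1, csInf_of_not_bddBelow hbdd]
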